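/- Let G be a directed graph on n vertices that is a disjoint union (possibly with edges from one part to the other but not back) of two strongly connected 'optimal' parts of sizes a and n-a with 1 ≤ a ≤ n-1, where a strongly connected part of size m has social welfare at most m(m-1) - c·⌈(m-1)/⌊k/2⌋⌉ - c(m-1). Then for n ≥ 3, 4 ≤ k ≤ 2√n, and 1 ≤ c < ⌊k/2⌋ - 1, the total social welfare of G is strictly less than n(n-1) - c·⌈(n-1)/⌊k/2⌋⌉ - c(n-1). -/
import Mathlib


variable {V : Type*} [Fintype V] [DecidableEq V]

/-- There is a directed path of length at most `k` from `a` to `b`. -/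
def within {W : Type*} (G : W → W → Prop) : ℕ → W → W → Prop
  | 0, a, b => a = b
  | m+1, a, b => a = b ∨ ∃ w, G a w ∧ within G m w b

/-- Vertices other than `v` reachable from `v` within distance `k`. -/
def reachK (G : V → V → Prop) (k : ℕ) (v : V) : Set V :=
  {w | w ≠ v ∧ within G k v w}

/-- Out-degree of `v`. -/
noncomputable def outdeg (G : V → V → Prop) (v : V) : ℕ :=
  {w | G v w}.ncard

/-- Utility of `v` with distance bound `k` and per-edge cost `c`. -/
noncomputable def utilK (G : V → V → Prop) (c : ℝ) (k : ℕ) (v : V) : ℝ :=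
  ((reachK G k v).ncard : ℝ) - c * (outdeg G v : ℝ)

/-- Unilateral deviation: `v` replaces its out-neighbourhood by `S`. -/
def deviateD (G : V → V → Prop) (v : V) (S : V → Prop) : V → V → Prop :=
  fun a b => if a = v then S b else G a b

/-- `m(m-1) - c⌈(m-1)/h⌉ - c(m-1)`, the optimal welfare of a strongly connected part of
size `m` (here `⌈a/h⌉` is written `(a + h - 1)/h` in ℕ). -/
noncomputable def fwel (c : ℝ) (h m : ℕ) : ℝ :=
  (m : ℝ) * ((m : ℝ) - 1) - c * (((m - 1 + (h - 1)) / h : ℕ) : ℝ) - c * ((m : ℝ) - 1)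

/-- If `G` splits into a part `A` of size `a` (with `1 ≤ a ≤ n-1`) and its complement,
where the welfare of the `A`-part is at most `fwel c ⌊k/2⌋ a` and the welfare of the other
part (which may reach into `A`) is at most `(n-a)(n-1) - c⌈(n-a-1)/⌊k/2⌋⌉ - c(n-a-1)`, then
for `n ≥ 3`, `4 ≤ k ≤ 2√n`, `1 ≤ c < ⌊k/2⌋ - 1`, the total social welfare of `G` is
strictly less than `n(n-1) - c⌈(n-1)/⌊k/2⌋⌉ - c(n-1)`. -/
theorem stmt18 (G : V → V → Prop) (c : ℝ) (k : ℕ) (A : Finset V)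
    (hn : 3 ≤ Fintype.card V) (hk : 4 ≤ k)
    (hk2 : (k : ℝ) ≤ 2 * Real.sqrt (Fintype.card V))
    (hc1 : 1 ≤ c) (hc2 : c < ((k / 2 : ℕ) : ℝ) - 1)
    (ha1 : 1 ≤ A.card) (ha2 : A.card ≤ Fintype.card V - 1)
    (hA : ∑ v ∈ A, utilK G c k v ≤ fwel c (k / 2) A.card)
    (hB : ∑ v ∈ Aᶜ, utilK G c k v ≤
      ((Fintype.card V : ℝ) - (A.card : ℝ)) * ((Fintype.card V : ℝ) - 1)
        - c * (((Fintype.card V - A.card - 1 + (k / 2 - 1)) / (k / 2) : ℕ) : ℝ)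
        - c * ((Fintype.card V : ℝ) - (A.card : ℝ) - 1)) :
    ∑ v : V, utilK G c k v < fwel c (k / 2) (Fintype.card V) := by
  classical
  have hsplit : ∑ v : V, utilK G c k v
      = ∑ v ∈ A, utilK G c k v + ∑ v ∈ Aᶜ, utilK G c k v :=
    (Finset.sum_add_sum_compl A _).symm
  set n := Fintype.card V with hnV
  set a := A.card with haA
  set h := k / 2 with hh
  have hhpos : 0 < h := by omega
  have hh2 : 2 ≤ h := by omega
  -- ceiling subadditivity in ℕ
  have addone : ∀ p q : ℕ, (p + q) / h ≤ p / h + q / h + 1 := by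
    intro p q
    have hp : h * (p / h) + p % h = p := Nat.div_add_mod p h
    have hq : h * (q / h) + q % h = q := Nat.div_add_mod q h
    have hpm : p % h < h := Nat.mod_lt _ hhpos
    have hqm : q % h < h := Nat.mod_lt _ hhpos
    have hlt : p + q < (p / h + q / h + 2) * h := by
      have e : (p / h + q / h + 2) * h = h * (p / h) + h * (q / h) + 2 * h := by ring
      rw [e]; linarith
    have := (Nat.div_lt_iff_lt_mul hhpos).mpr hlt
    omega
  have hceil : (n - 1 + (h - 1)) / h
      ≤ (a - 1 + (h - 1)) / h + (n - a - 1 + (h - 1)) / h + 1 := by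
    have e1 : n - 1 + (h - 1) ≤ (a - 1 + (h - 1)) + (n - a - 1 + (h - 1)) := by omega
    calc (n - 1 + (h - 1)) / h
        ≤ ((a - 1 + (h - 1)) + (n - a - 1 + (h - 1))) / h := Nat.div_le_div_right e1
      _ ≤ (a - 1 + (h - 1)) / h + (n - a - 1 + (h - 1)) / h + 1 := addone _ _
  have hceilR : (((n - 1 + (h - 1)) / h : ℕ) : ℝ)
      ≤ (((a - 1 + (h - 1)) / h : ℕ) : ℝ) + (((n - a - 1 + (h - 1)) / h : ℕ) : ℝ) + 1 := by
    exact_mod_cast hceil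
  have haR : (1 : ℝ) ≤ (a : ℝ) := by exact_mod_cast ha1
  have hanR : (a : ℝ) ≤ (n : ℝ) - 1 := by
    have h1 : (a : ℝ) ≤ ((n - 1 : ℕ) : ℝ) := by exact_mod_cast ha2
    rwa [Nat.cast_sub (by omega), Nat.cast_one] at h1
  have hnR : (3 : ℝ) ≤ (n : ℝ) := by exact_mod_cast hn
  have hprod : (n : ℝ) - 1 ≤ (a : ℝ) * ((n : ℝ) - (a : ℝ)) := by nlinarith
  have hsq : Real.sqrt n ^ 2 = (n : ℝ) := Real.sq_sqrt (by positivity)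
  have h2h : (2 * h : ℕ) ≤ k := by omega
  have hhR : (h : ℝ) ≤ Real.sqrt n := by
    have h1 : ((2 * h : ℕ) : ℝ) ≤ (k : ℝ) := by exact_mod_cast h2h
    push_cast at h1
    linarith
  have hcR : c < (h : ℝ) - 1 := hc2
  have h2c : 2 * c < (n : ℝ) - 1 := by
    nlinarith [sq_nonneg (Real.sqrt n - 1), Real.sqrt_nonneg (n : ℝ)]
  rw [hsplit]
  refine lt_of_le_of_lt (add_le_add hA hB) ?_
  simp only [fwel]
  nlinarith [hceilR, hprod, h2c, hc1]
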